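/- arXiv:2203.09455 — 3 statements merged into one kernel-verified Lean document; each statement's English description precedes it below -/
import Mathlib

section
/- Let p ≥ 3, h ≥ 2, N ≥ 1 be natural numbers, set |v_i| = 2(p^i - 1), and let t = 2h + ∑_{i=1}^{h-1} d_i·|v_i| - p^N·|v_h|/(p-1) where 1 ≤ d_i ≤ p^N for all i. Then t is not congruent to 0 modulo p^N·|v_h| and t is not congruent to 2p - 2 modulo p^N·|v_h|. -/
theorem stmt_8 (p h N : ℕ) (hp : 3 ≤ p) (hh : 2 ≤ h) (hN : 1 ≤ N)
    (d : ℕ → ℤ) (hd : ∀ i ∈ Finset.Icc 1 (h - 1), 1 ≤ d i ∧ d i ≤ (p : ℤ) ^ N) :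
    ¬ Int.ModEq ((p : ℤ) ^ N * (2 * ((p : ℤ) ^ h - 1)))
        (2 * h + (∑ i ∈ Finset.Icc 1 (h - 1), d i * (2 * ((p : ℤ) ^ i - 1))) -
          (p : ℤ) ^ N * (2 * ((p : ℤ) ^ h - 1)) / ((p : ℤ) - 1)) 0 ∧
      ¬ Int.ModEq ((p : ℤ) ^ N * (2 * ((p : ℤ) ^ h - 1)))
        (2 * h + (∑ i ∈ Finset.Icc 1 (h - 1), d i * (2 * ((p : ℤ) ^ i - 1))) -
          (p : ℤ) ^ N * (2 * ((p : ℤ) ^ h - 1)) / ((p : ℤ) - 1)) (2 * p - 2) := by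
  have hp' : (3 : ℤ) ≤ (p : ℤ) := by exact_mod_cast hp
  have hh' : (2 : ℤ) ≤ (h : ℤ) := by exact_mod_cast hh
  set σ : ℤ := ∑ i ∈ Finset.range h, (p : ℤ) ^ i with hσdef
  have hgeom : ((p : ℤ) - 1) * σ = (p : ℤ) ^ h - 1 := mul_geom_sum _ h
  have hne : ((p : ℤ) - 1) ≠ 0 := by linarith
  have hD : (p : ℤ) ^ N * (2 * ((p : ℤ) ^ h - 1)) = ((p : ℤ) - 1) * (2 * (p : ℤ) ^ N * σ) := by
    rw [← hgeom]; ring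
  have hdiv : (p : ℤ) ^ N * (2 * ((p : ℤ) ^ h - 1)) / ((p : ℤ) - 1) = 2 * (p : ℤ) ^ N * σ := by
    rw [hD, Int.mul_ediv_cancel_left _ hne]
  have hsum : (∑ i ∈ Finset.Icc 1 (h - 1), (p : ℤ) ^ i) = σ - 1 := by
    have hIcc : Finset.Icc 1 (h - 1) = Finset.Ico 1 h := by
      ext x; simp only [Finset.mem_Icc, Finset.mem_Ico]; omega
    rw [hIcc, hσdef, Finset.range_eq_Ico,
      Finset.sum_eq_sum_Ico_succ_bot (by omega : 0 < h)]
    simp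
  have hcard : ((Finset.Icc 1 (h - 1)).card : ℤ) = (h : ℤ) - 1 := by
    rw [Nat.card_Icc]; push_cast; omega
  have hterm_nonneg : ∀ i ∈ Finset.Icc 1 (h - 1), (0 : ℤ) ≤ 2 * ((p : ℤ) ^ i - 1) := by
    intro i _
    have : (1 : ℤ) ≤ (p : ℤ) ^ i := one_le_pow₀ (by linarith)
    linarith
  set S : ℤ := ∑ i ∈ Finset.Icc 1 (h - 1), d i * (2 * ((p : ℤ) ^ i - 1)) with hSdef
  have hlosum : (∑ i ∈ Finset.Icc 1 (h - 1), (2 * ((p : ℤ) ^ i - 1))) =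
      2 * (σ - 1) - 2 * ((h : ℤ) - 1) := by
    have e : ∀ i, 2 * ((p : ℤ) ^ i - 1) = 2 * (p : ℤ) ^ i - 2 := fun i => by ring
    simp_rw [e]
    rw [Finset.sum_sub_distrib, ← Finset.mul_sum, hsum, Finset.sum_const, nsmul_eq_mul, hcard]
    ring
  have hS_lo : 2 * (σ - 1) - 2 * ((h : ℤ) - 1) ≤ S := by
    rw [← hlosum]
    exact Finset.sum_le_sum fun i hi =>
      le_mul_of_one_le_left (hterm_nonneg i hi) (hd i hi).1
  have hS_hi : S ≤ (p : ℤ) ^ N * (2 * (σ - 1) - 2 * ((h : ℤ) - 1)) := by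
    rw [← hlosum, Finset.mul_sum]
    exact Finset.sum_le_sum fun i hi =>
      mul_le_mul_of_nonneg_right (hd i hi).2 (hterm_nonneg i hi)
  have hpN : (3 : ℤ) ≤ (p : ℤ) ^ N := by
    calc (3 : ℤ) ≤ (p : ℤ) := hp'
    _ = (p : ℤ) ^ 1 := (pow_one _).symm
    _ ≤ (p : ℤ) ^ N := pow_le_pow_right₀ (by linarith) hN
  have hσ2 : (p : ℤ) + 1 ≤ σ := by
    have : (∑ i ∈ Finset.range 2, (p : ℤ) ^ i) ≤ σ := by
      apply Finset.sum_le_sum_of_subset_of_nonneg (Finset.range_subset_range.2 hh)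
      intro i _ _; positivity
    simp [Finset.sum_range_succ] at this; linarith
  set M : ℤ := (p : ℤ) ^ N * (2 * ((p : ℤ) ^ h - 1)) with hMdef
  set t : ℤ := 2 * (h : ℤ) + S - M / ((p : ℤ) - 1) with htdef
  have ht : t = 2 * (h : ℤ) + S - 2 * (p : ℤ) ^ N * σ := by rw [htdef, hdiv]
  have hM : M = 2 * (p : ℤ) ^ N * ((p : ℤ) - 1) * σ := by linear_combination hD
  have ht_neg : t < 0 := by
    rw [ht]; nlinarith [hS_hi, hpN, hh', hσ2]
  have ht_lb : 2 * (p : ℤ) - 2 - M < t := by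
    rw [ht, hM]; nlinarith [hS_lo, hpN, hp', hσ2]
  have hMpos : 0 < M := by rw [hM]; nlinarith [hpN, hp', hσ2]
  constructor
  · intro H
    have hdvd : M ∣ 0 - t := H.dvd
    have : M ≤ 0 - t := Int.le_of_dvd (by linarith) hdvd
    linarith
  · intro H
    have hdvd : M ∣ (2 * (p : ℤ) - 2) - t := H.dvd
    have : M ≤ (2 * (p : ℤ) - 2) - t := Int.le_of_dvd (by linarith) hdvd
    linarith
end

section
/- Define a_{h,N} for h ≥ 2 by the recursion a_{h,0} = 1, a_{h,1} = p, and for N > 1: a_{h,N} = p·a_{h,N-1} if N ≢ 1 (mod h-1), and a_{h,N} = p·a_{h,N-1} + p - 1 if N ≡ 1 (mod h-1). Then for N ≥ 1, a_{h,N} = p^N + (p-1)(p^{N-1} - p^{r-1})/(p^{h-1} - 1), where r is the unique integer with 1 ≤ r ≤ h-1 and N ≡ r (mod h-1). -/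
theorem stmt_10 (p h : ℕ) (hp : 2 ≤ p) (hh : 2 ≤ h) (a : ℕ → ℕ)
    (ha0 : a 0 = 1) (ha1 : a 1 = p)
    (haN : ∀ N, 1 < N →
      a N = if N % (h - 1) = 1 % (h - 1) then p * a (N - 1) + p - 1 else p * a (N - 1))
    (N r : ℕ) (hN : 1 ≤ N) (hr1 : 1 ≤ r) (hr2 : r ≤ h - 1) (hNr : N % (h - 1) = r % (h - 1)) :
    (a N : ℤ) = (p : ℤ) ^ N +
      ((p : ℤ) - 1) * ((p : ℤ) ^ (N - 1) - (p : ℤ) ^ (r - 1)) / ((p : ℤ) ^ (h - 1) - 1) := by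
  set m := h - 1 with hm
  have hm1 : 1 ≤ m := by omega
  have hpZ : (1:ℤ) < (p:ℤ) := by exact_mod_cast hp
  have hD : (1:ℤ) < (p:ℤ)^m := one_lt_pow₀ hpZ (by omega)
  have key : ∀ n, 1 ≤ n → (a n : ℤ) * ((p:ℤ)^m - 1) =
      (p:ℤ)^n * ((p:ℤ)^m - 1) + ((p:ℤ)-1) * ((p:ℤ)^(n-1) - (p:ℤ)^((n-1) % m)) := by
    intro n hn
    induction n with
    | zero => omega
    | succ k ih =>
      rcases Nat.eq_or_lt_of_le hn with h1 | h1
      · have hk0 : k = 0 := by omega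
        subst hk0
        simp [ha1]
      · have hk : 1 ≤ k := by omega
        have ihk := ih hk
        have hrec := haN (k+1) (by omega)
        simp only [Nat.add_sub_cancel] at hrec ⊢
        have e1 : (p:ℤ)^k = (p:ℤ)^(k-1) * p := by
          rw [← pow_succ]; congr 1; omega
        by_cases hc : (k+1) % m = 1 % m
        · rw [if_pos hc] at hrec
          have hk0 : k % m = 0 := by
            have h2 : k ≡ 0 [MOD m] := Nat.ModEq.add_right_cancel' 1 hc
            simpa [Nat.ModEq] using h2
          have hkm : (k-1) % m = m - 1 := by
            obtain ⟨q, hq⟩ := Nat.dvd_of_mod_eq_zero hk0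
            have hq1 : q ≠ 0 := by rintro rfl; omega
            obtain ⟨q', rfl⟩ : ∃ q', q = q' + 1 := ⟨q - 1, by omega⟩
            have : k - 1 = m * q' + (m - 1) := by
              have : k = m * q' + m := by rw [hq]; ring
              omega
            rw [this, Nat.mul_add_mod]
            exact Nat.mod_eq_of_lt (by omega)
          rw [hrec, hk0, pow_zero]
          have hcast : ((p * a k + p - 1 : ℕ) : ℤ) = (p:ℤ) * (a k) + p - 1 := by
            have h3 : 1 ≤ p * a k + p := le_trans (by omega) (Nat.le_add_left p _)
            push_cast [Nat.cast_sub h3]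
            ring
          rw [hcast]
          have e2 : (p:ℤ)^m = (p:ℤ)^(m-1) * p := by
            rw [← pow_succ]; congr 1; omega
          rw [hkm, e1, e2] at ihk
          rw [pow_succ, e1, e2]
          linear_combination (p:ℤ) * ihk
        · rw [if_neg hc] at hrec
          have hm2 : 2 ≤ m := by
            by_contra h2
            have : m = 1 := by omega
            exact hc (by simp [this, Nat.mod_one])
          have h1m : 1 % m = 1 := Nat.mod_eq_of_lt hm2
          have hkm0 : k % m ≠ 0 := by
            intro h2
            have h3 : k ≡ 0 [MOD m] := by simpa [Nat.ModEq] using h2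
            exact hc ((h3.add_right 1) : _)
          have hmod : k % m = (k-1) % m + 1 := by
            have hj : (k-1) % m < m := Nat.mod_lt _ (by omega)
            have h4 : k % m = ((k-1) % m + 1) % m := by
              conv_lhs => rw [show k = (k-1)+1 from by omega]
              rw [Nat.add_mod, h1m]
            rcases Nat.lt_or_ge ((k-1) % m + 1) m with hlt | hge
            · rw [h4]; exact Nat.mod_eq_of_lt hlt
            · exfalso
              have h5 : (k-1) % m + 1 = m := by omega
              rw [h4, h5, Nat.mod_self] at hkm0
              exact hkm0 rfl
          rw [hrec, hmod]
          have e3 : (p:ℤ)^((k-1) % m + 1) = (p:ℤ)^((k-1) % m) * p := pow_succ _ _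
          push_cast
          rw [e1] at ihk
          rw [e3, pow_succ, e1]
          linear_combination (p:ℤ) * ihk
  have keyN := key N hN
  have hNr' : (N-1) % m = r - 1 := by
    have h1 : (N-1)+1 = N := by omega
    have h2 : (r-1)+1 = r := by omega
    have h3 : (N-1)+1 ≡ (r-1)+1 [MOD m] := by rw [h1, h2]; exact hNr
    have h4 : (N-1) ≡ (r-1) [MOD m] := Nat.ModEq.add_right_cancel' 1 h3
    have h5 : (r-1) % m = r - 1 := Nat.mod_eq_of_lt (by omega)
    rw [← h5]; exact h4
  rw [hNr'] at keyN
  have hD0 : (p:ℤ)^m - 1 ≠ 0 := by linarith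
  have heq : ((p:ℤ)-1) * ((p:ℤ)^(N-1) - (p:ℤ)^(r-1)) =
      ((a N : ℤ) - (p:ℤ)^N) * ((p:ℤ)^m - 1) := by linarith
  rw [heq, Int.mul_ediv_cancel _ hD0]
  ring
end

section
/- Let p ≥ 3, h ≥ 2, N ≥ 1 with a_{h,N} = p^N + (p-1)(p^{N-1} - p^{r-1})/(p^{h-1} - 1) where 1 ≤ r ≤ h-1 and N ≡ r (mod h-1), and |v_i| = 2(p^i - 1). Then -((p^N - 1)·|v_h|)/(p-1) + (a_{h,N} - 1)·|v_{h-1}| < 0; that is, the upper bound for contributing degrees in Proposition on MRW vanishing is strictly negative. -/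
theorem stmt_12 (p h N r : ℕ) (hp : 3 ≤ p) (hh : 2 ≤ h) (hN : 1 ≤ N)
    (hr1 : 1 ≤ r) (hr2 : r ≤ h - 1) (hNr : N % (h - 1) = r % (h - 1)) :
    (((p : ℤ) ^ N +
        ((p : ℤ) - 1) * ((p : ℤ) ^ (N - 1) - (p : ℤ) ^ (r - 1)) / ((p : ℤ) ^ (h - 1) - 1)) - 1) *
        (2 * ((p : ℤ) ^ (h - 1) - 1)) <
      2 * ((p : ℤ) ^ N - 1) * ((p : ℤ) ^ h - 1) / ((p : ℤ) - 1) := by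
  set P : ℤ := (p : ℤ) with hP
  have hp' : (3:ℤ) ≤ P := by rw [hP]; exact_mod_cast hp
  -- r ≤ N
  have hrN : r ≤ N := by
    rcases Nat.lt_or_ge r (h-1) with hlt | hge
    · have h1 := Nat.mod_le N (h-1)
      rw [hNr, Nat.mod_eq_of_lt hlt] at h1
      exact h1
    · have hr : r = h - 1 := le_antisymm hr2 hge
      have : N % (h-1) = 0 := by rw [hNr, hr, Nat.mod_self]
      have hd := Nat.dvd_of_mod_eq_zero this
      have := Nat.le_of_dvd (by omega) hd
      omega
  -- (h-1) ∣ (N-r)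
  have hmod : Nat.ModEq (h-1) r N := hNr.symm
  obtain ⟨k, hk⟩ := (Nat.modEq_iff_dvd' hrN).mp hmod
  -- divisibility 1
  have hpow1 : P ^ (N-1) = P ^ (r-1) * P ^ (N-r) := by
    rw [← pow_add]; congr 1; omega
  have hpow2 : P ^ (N-r) = (P ^ (h-1)) ^ k := by
    rw [hk, pow_mul]
  have hdvd1 : (P ^ (h-1) - 1) ∣ (P - 1) * (P ^ (N-1) - P ^ (r-1)) := by
    have : (P ^ (h-1) - 1) ∣ P ^ (N-r) - 1 := by
      rw [hpow2]
      simpa using sub_dvd_pow_sub_pow (P ^ (h-1)) 1 k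
    have h2 : (P ^ (h-1) - 1) ∣ P ^ (N-1) - P ^ (r-1) := by
      rw [hpow1]
      have : P ^ (r-1) * (P ^ (N-r)) - P ^ (r-1) * 1 = P ^ (r-1) * (P ^ (N-r) - 1) := by ring
      rw [show P ^ (r-1) * (P ^ (N-r)) - P ^ (r-1) = P ^ (r-1) * (P ^ (N-r) - 1) by ring]
      exact Dvd.dvd.mul_left ‹_› _
    exact h2.mul_left _
  have hdvd2 : (P - 1) ∣ 2 * (P ^ N - 1) * (P ^ h - 1) := by
    have : (P - 1) ∣ P ^ h - 1 := by simpa using sub_dvd_pow_sub_pow P 1 h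
    exact this.mul_left _
  set c : ℤ := (P - 1) * (P ^ (N-1) - P ^ (r-1)) / (P ^ (h-1) - 1) with hcdef
  set e : ℤ := 2 * (P ^ N - 1) * (P ^ h - 1) / (P - 1) with hedef
  have hc : (P ^ (h-1) - 1) * c = (P - 1) * (P ^ (N-1) - P ^ (r-1)) :=
    Int.mul_ediv_cancel' hdvd1
  have he : (P - 1) * e = 2 * (P ^ N - 1) * (P ^ h - 1) :=
    Int.mul_ediv_cancel' hdvd2
  -- reduce to multiplied inequality
  have hdpos : (0:ℤ) < P - 1 := by linarith
  refine lt_of_mul_lt_mul_right ?_ hdpos.le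
  rw [mul_comm e (P - 1), he]
  -- key facts
  have hZW : P ^ (r-1) ≤ P ^ (N-1) := pow_le_pow_right₀ (by linarith) (by omega)
  have hW1 : (1:ℤ) ≤ P ^ (r-1) := one_le_pow₀ (by linarith)
  have hY : P ^ N = P ^ (N-1) * P := by rw [← pow_succ]; congr 1; omega
  have hX : P ^ h = P ^ (h-1) * P := by rw [← pow_succ]; congr 1; omega
  have hkey : (P - 1) * (P ^ (N-1) - P ^ (r-1)) ≤ P ^ N - 1 := by nlinarith
  have h1 : 0 < (P ^ (h-1) - 1) * (P ^ N - 1) := by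
    have hx1 : (1:ℤ) < P ^ (h-1) := one_lt_pow₀ (by linarith) (by omega)
    have hy1 : (1:ℤ) < P ^ N := one_lt_pow₀ (by linarith) (by omega)
    exact mul_pos (by linarith) (by linarith)
  have h2 : 0 ≤ (P - 1) * ((P ^ N - 1) - (P - 1) * (P ^ (N-1) - P ^ (r-1))) :=
    mul_nonneg (by linarith) (by linarith)
  have expand : (P ^ N + c - 1) * (2 * (P ^ (h-1) - 1)) * (P - 1)
      = 2 * (P ^ (h-1) - 1) * (P - 1) * (P ^ N - 1)
        + 2 * (P - 1) * ((P - 1) * (P ^ (N-1) - P ^ (r-1))) := by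
    linear_combination (2 * (P - 1)) * hc
  rw [expand, hX]
  linarith [h1, h2]
end
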